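/- arXiv:1807.07640 — 2 statements merged into one kernel-verified Lean document; each statement's English description precedes it below -/
import Mathlib

section
/- For every finite simple graph G with maximum degree Δ, the arboricity of G is at most ⌈(Δ + 1)/2⌉. -/
/-- The edge set of `G` can be partitioned into `k` forests. -/
def HasForestPartition {V : Type*} (G : SimpleGraph V) (k : ℕ) : Prop :=
  ∃ f : G.edgeSet → Fin k, ∀ i : Fin k,
    (SimpleGraph.fromEdgeSet {e : Sym2 V | ∃ h : e ∈ G.edgeSet, f ⟨e, h⟩ = i}).IsAcyclic

/-- The arboricity of `G`. -/
noncomputable def arboricity {V : Type*} (G : SimpleGraph V) : ℕ :=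
  sInf {k | HasForestPartition G k}

section ArboricityAux
open SimpleGraph


variable {V : Type*}

/-- Transfer reachability along a per-edge reachability map. -/
lemma reach_of_adj_reach {H H' : SimpleGraph V}
    (h : ∀ a b, H.Adj a b → H'.Reachable a b) {u v : V}
    (huv : H.Reachable u v) : H'.Reachable u v := by
  obtain ⟨w⟩ := huv
  induction w with
  | nil => exact Reachable.refl _
  | cons ha _ ih => exact (h _ _ ha).trans ih

lemma reach_iff_of_le {H H' : SimpleGraph V} (h1 : H ≤ H')
    (h2 : ∀ a b, H'.Adj a b → H.Reachable a b) (u v : V) :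
    H.Reachable u v ↔ H'.Reachable u v :=
  ⟨fun h => h.mono h1, fun h => reach_of_adj_reach h2 h⟩

/-- A cycle transfers down a subgraph relation (upward): acyclicity is antitone. -/
lemma IsAcyclic.anti {H H' : SimpleGraph V} (h : H ≤ H') (ha : H'.IsAcyclic) :
    H.IsAcyclic := by
  intro v c hc
  exact ha (c.transfer H' (fun e he => (edgeSet_subset_edgeSet.2 h) (c.edges_subset_edgeSet he)))
    (hc.transfer _)

lemma mem_of_mem_fromEdgeSet_edges {s : Set (Sym2 V)} {u v : V}
    {w : (SimpleGraph.fromEdgeSet s).Walk u v} {f : Sym2 V} (hf : f ∈ w.edges) :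
    f ∈ s ∧ ¬ f.IsDiag := by
  have := w.edges_subset_edgeSet hf
  rw [edgeSet_fromEdgeSet] at this
  exact ⟨this.1, this.2⟩

section B
variable {V : Type*}

lemma reach_of_adj_reachDUP {H H' : SimpleGraph V}
    (h : ∀ a b, H.Adj a b → H'.Reachable a b) {u v : V}
    (huv : H.Reachable u v) : H'.Reachable u v := by
  obtain ⟨w⟩ := huv
  induction w with
  | nil => exact Reachable.refl _
  | cons ha _ ih => exact (h _ _ ha).trans ih

/-- Adding an edge between non-connected vertices of a forest keeps it a forest. -/
lemma acyclic_insert {s : Set (Sym2 V)} (hs : (fromEdgeSet s).IsAcyclic) {x y : V}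
    (hxy : x ≠ y) (hnr : ¬ (fromEdgeSet s).Reachable x y) :
    (fromEdgeSet (insert s(x, y) s)).IsAcyclic := by
  intro v c hc
  by_cases hec : s(x, y) ∈ c.edges
  · obtain ⟨-, hreach⟩ := (adj_and_reachable_delete_edges_iff_exists_cycle.2 ⟨v, c, hc, hec⟩)
    apply hnr
    refine hreach.mono ?_
    intro a b hab
    simp only [deleteEdges, sdiff_adj, fromEdgeSet_adj, Set.mem_insert_iff] at hab
    obtain ⟨⟨h1, h2⟩, h3⟩ := hab
    rcases h1 with h1 | h1
    · exact absurd ((fromEdgeSet_adj _).2 ⟨h1 ▸ rfl, h2⟩) h3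
    · exact (fromEdgeSet_adj _).2 ⟨h1, h2⟩
  · refine hs (c.transfer (fromEdgeSet s) ?_) (hc.transfer _)
    intro f hf
    have h1 := c.edges_subset_edgeSet hf
    rw [edgeSet_fromEdgeSet] at h1 ⊢
    rcases Set.mem_insert_iff.1 h1.1 with h | h
    · exact absurd (h ▸ hf) hec
    · exact ⟨h, h1.2⟩

/-- Exchanging an edge of the unique path for the new chord keeps a forest a forest. -/
lemma acyclic_exchange [DecidableEq V] {s : Set (Sym2 V)} (hs : (fromEdgeSet s).IsAcyclic) {x y : V}
    (hxy : x ≠ y) (hes : s(x, y) ∉ s) {p : (fromEdgeSet s).Walk x y} (hp : p.IsPath)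
    {f : Sym2 V} (hf : f ∈ p.edges) :
    (fromEdgeSet (insert s(x, y) (s \ {f}))).IsAcyclic := by
  intro v c hc
  have hfs : f ∈ s ∧ ¬ f.IsDiag := by
    have := p.edges_subset_edgeSet hf
    rw [edgeSet_fromEdgeSet] at this; exact this
  have hfe : f ≠ s(x, y) := by
    rintro rfl; exact hes hfs.1
  by_cases hec : s(x, y) ∈ c.edges
  · obtain ⟨-, hreach⟩ := (adj_and_reachable_delete_edges_iff_exists_cycle.2 ⟨v, c, hc, hec⟩)
    -- reachability of x y in fromEdgeSet (s \ {f})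
    have hreach' : (fromEdgeSet (s \ {f})).Reachable x y := by
      refine hreach.mono ?_
      intro a b hab
      simp only [deleteEdges, sdiff_adj, fromEdgeSet_adj, Set.mem_insert_iff] at hab
      obtain ⟨⟨h1, h2⟩, h3⟩ := hab
      rcases h1 with h1 | h1
      · exact absurd ((fromEdgeSet_adj _).2 ⟨h1 ▸ rfl, h2⟩) h3
      · exact (fromEdgeSet_adj _).2 ⟨h1, h2⟩
    -- build a path in fromEdgeSet s from x to y avoiding f
    obtain ⟨q⟩ := hreach'
    have hq' : ∀ e ∈ q.toPath.1.edges, e ∈ (fromEdgeSet s).edgeSet := by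
      intro e he
      have h1 : e ∈ q.edges := q.edges_toPath_subset he
      have h2 := q.edges_subset_edgeSet h1
      rw [edgeSet_fromEdgeSet] at h2 ⊢
      exact ⟨h2.1.1, h2.2⟩
    have hqf : f ∉ q.toPath.1.edges := by
      intro he
      have h2 := q.edges_subset_edgeSet (q.edges_toPath_subset he)
      rw [edgeSet_fromEdgeSet] at h2
      exact h2.1.2 rfl
    have hQP : (⟨q.toPath.1.transfer (fromEdgeSet s) hq', q.toPath.2.transfer hq'⟩ :
        (fromEdgeSet s).Path x y) = ⟨p, hp⟩ := isAcyclic_iff_path_unique.1 hs _ _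
    apply hqf
    have := congrArg (fun P : (fromEdgeSet s).Path x y => P.1.edges) hQP
    simp only [Walk.edges_transfer] at this
    rw [this]; exact hf
  · -- cycle avoiding the new edge lives in s \ {f} ⊆ s
    refine hs (c.transfer (fromEdgeSet s) ?_) (hc.transfer _)
    intro g hg
    have h1 := c.edges_subset_edgeSet hg
    rw [edgeSet_fromEdgeSet] at h1 ⊢
    rcases Set.mem_insert_iff.1 h1.1 with h | h
    · exact absurd (h ▸ hg) hec
    · exact ⟨h.1, h1.2⟩

end B
variable {V : Type*} [DecidableEq V]

def Good (G : SimpleGraph V) {k : ℕ} (F : Fin k → Finset (Sym2 V)) : Prop :=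
  (∀ i, (↑(F i) : Set (Sym2 V)) ⊆ G.edgeSet) ∧
    (∀ i, (fromEdgeSet (↑(F i) : Set (Sym2 V))).IsAcyclic) ∧
    (∀ i j, i ≠ j → Disjoint (F i) (F j))

def tot {V : Type*} {k : ℕ} (F : Fin k → Finset (Sym2 V)) : ℕ := ∑ i, (F i).card

inductive Reach {k : ℕ} (F0 : Fin k → Finset (Sym2 V)) (e0 : Sym2 V) :
    (Fin k → Finset (Sym2 V)) → Sym2 V → Prop
  | base : Reach F0 e0 F0 e0
  | step {F : Fin k → Finset (Sym2 V)} {e : Sym2 V} (hR : Reach F0 e0 F e) (i : Fin k)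
      {x y : V} (hxy : e = s(x, y))
      (p : (fromEdgeSet (↑(F i) : Set (Sym2 V))).Walk x y) (hp : p.IsPath) {f : Sym2 V}
      (hf : f ∈ p.edges) :
      Reach F0 e0 (Function.update F i (insert e ((F i).erase f))) f

section Invariants

variable {G : SimpleGraph V} {k : ℕ} {F0 : Fin k → Finset (Sym2 V)} {e0 : Sym2 V}

lemma reach_invariant (hG0 : Good G F0) (he0 : e0 ∈ G.edgeSet) (hu0 : ∀ i, e0 ∉ F0 i)
    {F : Fin k → Finset (Sym2 V)} {e : Sym2 V} (hR : Reach F0 e0 F e) :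
    Good G F ∧ tot F = tot F0 ∧ e ∈ G.edgeSet ∧ ∀ i, e ∉ F i := by
  induction hR with
  | base => exact ⟨hG0, rfl, he0, hu0⟩
  | @step F e hR i x y hxy p hp f hf ih =>
    obtain ⟨⟨hsub, hacyc, hdisj⟩, htot, heE, huncov⟩ := ih
    subst hxy
    have hxyne : x ≠ y := by
      have := G.not_isDiag_of_mem_edgeSet heE
      simpa using this
    have hfFi : f ∈ F i ∧ ¬ f.IsDiag := by
      have := p.edges_subset_edgeSet hf
      rw [edgeSet_fromEdgeSet] at this
      exact ⟨this.1, this.2⟩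
    have hfe : f ≠ s(x, y) := fun h => huncov i (h ▸ hfFi.1)
    have hcoe : (↑(insert s(x, y) ((F i).erase f)) : Set (Sym2 V))
        = insert s(x, y) ((↑(F i) : Set (Sym2 V)) \ {f}) := by
      push_cast
      rfl
    refine ⟨⟨?_, ?_, ?_⟩, ?_, ?_, ?_⟩
    · intro j
      rcases eq_or_ne j i with rfl | hji
      · rw [Function.update_self, hcoe]
        rintro g (rfl | hg)
        · exact heE
        · exact hsub j (Set.diff_subset hg)
      · rw [Function.update_of_ne hji]; exact hsub j
    · intro j
      rcases eq_or_ne j i with rfl | hji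
      · rw [Function.update_self, hcoe]
        exact acyclic_exchange (hacyc j) hxyne (fun h => huncov j h) hp hf
      · rw [Function.update_of_ne hji]; exact hacyc j
    · intro j j' hjj'
      have key : ∀ j', i ≠ j' → Disjoint (insert s(x, y) ((F i).erase f)) (F j') := by
        intro j' hij'
        rw [Finset.disjoint_insert_left]
        exact ⟨fun h => huncov j' h, Finset.disjoint_of_subset_left (Finset.erase_subset _ _)
          (hdisj i j' hij')⟩
      rcases eq_or_ne j i with rfl | hji
      · rw [Function.update_self, Function.update_of_ne hjj'.symm]
        exact key j' hjj'
      · rw [Function.update_of_ne hji]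
        rcases eq_or_ne j' i with rfl | hji'
        · rw [Function.update_self]
          exact (key j hji.symm).symm
        · rw [Function.update_of_ne hji']
          exact hdisj j j' hjj'
    · rw [← htot]
      unfold tot
      have hcard : (insert s(x, y) ((F i).erase f)).card = (F i).card := by
        rw [Finset.card_insert_of_notMem (fun h => huncov i (Finset.erase_subset _ _ h)),
          Finset.card_erase_of_mem hfFi.1]
        have : 1 ≤ (F i).card := Finset.card_pos.2 ⟨f, hfFi.1⟩
        omega
      have hup : ∀ j, ((Function.update F i (insert s(x, y) ((F i).erase f))) j).card
          = (Function.update (fun j => (F j).card) i (insert s(x, y) ((F i).erase f)).card) j :=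
        fun j => Function.apply_update (fun _ s => s.card) F i _ j
      rw [Finset.sum_congr rfl (fun j _ => hup j),
        Finset.sum_update_of_mem (Finset.mem_univ i), hcard,
        Finset.sum_eq_sum_sdiff_singleton_add (Finset.mem_univ i) (fun j => (F j).card), add_comm]
    · exact hsub i hfFi.1
    · intro j
      rcases eq_or_ne j i with rfl | hji
      · rw [Function.update_self]
        simp only [Finset.mem_insert]
        rintro (h | h)
        · exact hfe h
        · exact (Finset.notMem_erase f _) h
      · rw [Function.update_of_ne hji]
        exact fun h => Finset.disjoint_left.1 (hdisj i j (fun hh => hji (hh ▸ rfl))) hfFi.1 h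

end Invariants

section Part4
variable {V : Type*} [DecidableEq V]

/-- The set of edges appearing as uncovered edge in some reachable state. -/
def Aset {k : ℕ} (F0 : Fin k → Finset (Sym2 V)) (e0 : Sym2 V) : Set (Sym2 V) :=
  {e | ∃ F, Reach F0 e0 F e}

variable {G : SimpleGraph V} {k : ℕ} {F0 : Fin k → Finset (Sym2 V)} {e0 : Sym2 V}

/-- basic insert-reachability congruence -/
lemma reach_insert_iff {s : Set (Sym2 V)} {x y : V}
    (h : (fromEdgeSet s).Reachable x y) (u v : V) :
    (fromEdgeSet (insert s(x, y) s)).Reachable u v ↔ (fromEdgeSet s).Reachable u v := by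
  refine (reach_iff_of_le (fromEdgeSet_mono (Set.subset_insert _ _)) ?_ u v).symm
  intro a b hab
  rw [fromEdgeSet_adj] at hab
  obtain ⟨h1, hne⟩ := hab
  rcases Set.mem_insert_iff.1 h1 with h1 | h1
  · rcases Sym2.eq_iff.1 h1 with ⟨rfl, rfl⟩ | ⟨rfl, rfl⟩
    · exact h
    · exact h.symm
  · exact ((fromEdgeSet_adj _).2 ⟨h1, hne⟩).reachable

/-- basic delete-reachability congruence -/
lemma reach_sdiff_iff {s : Set (Sym2 V)} {a b : V}
    (h : (fromEdgeSet (s \ {s(a, b)})).Reachable a b) (u v : V) :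
    (fromEdgeSet (s \ {s(a, b)})).Reachable u v ↔ (fromEdgeSet s).Reachable u v := by
  refine reach_iff_of_le (fromEdgeSet_mono Set.diff_subset) ?_ u v
  intro c d hcd
  rw [fromEdgeSet_adj] at hcd
  obtain ⟨h1, hne⟩ := hcd
  by_cases hf : s(c, d) = s(a, b)
  · rcases Sym2.eq_iff.1 hf with ⟨rfl, rfl⟩ | ⟨rfl, rfl⟩
    · exact h
    · exact h.symm
  · exact ((fromEdgeSet_adj _).2 ⟨Set.mem_diff_singleton.2 ⟨h1, hf⟩, hne⟩).reachable

/-- If the tuple is of maximal total size, the ends of the uncovered edge are connected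
in every forest of the tuple. -/
lemma reach_keyconn (hG0 : Good G F0) (he0 : e0 ∈ G.edgeSet) (hu0 : ∀ i, e0 ∉ F0 i)
    (hmax : ∀ F : Fin k → Finset (Sym2 V), Good G F → tot F ≤ tot F0)
    {F : Fin k → Finset (Sym2 V)} {e : Sym2 V} (hR : Reach F0 e0 F e)
    {x y : V} (hxy : e = s(x, y)) (i : Fin k) :
    ∃ p : (fromEdgeSet (↑(F i) : Set (Sym2 V))).Walk x y, p.IsPath := by
  obtain ⟨⟨hsub, hacyc, hdisj⟩, htot, heE, huncov⟩ := reach_invariant hG0 he0 hu0 hR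
  subst hxy
  have hxyne : x ≠ y := by simpa using G.not_isDiag_of_mem_edgeSet heE
  by_cases h : (fromEdgeSet (↑(F i) : Set (Sym2 V))).Reachable x y
  · obtain ⟨w⟩ := h
    exact ⟨w.toPath.1, w.toPath.2⟩
  · exfalso
    have hGood : Good G (Function.update F i (insert s(x, y) (F i))) := by
      refine ⟨?_, ?_, ?_⟩
      · intro j
        rcases eq_or_ne j i with rfl | hji
        · rw [Function.update_self]
          push_cast
          rintro g (rfl | hg)
          · exact heE
          · exact hsub j hg
        · rw [Function.update_of_ne hji]; exact hsub j
      · intro j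
        rcases eq_or_ne j i with rfl | hji
        · rw [Function.update_self]
          push_cast
          exact acyclic_insert (hacyc j) hxyne h
        · rw [Function.update_of_ne hji]; exact hacyc j
      · intro j j' hjj'
        have key : ∀ j', i ≠ j' → Disjoint (insert s(x, y) (F i)) (F j') := by
          intro j' hij'
          rw [Finset.disjoint_insert_left]
          exact ⟨fun hh => huncov j' hh, hdisj i j' hij'⟩
        rcases eq_or_ne j i with rfl | hji
        · rw [Function.update_self, Function.update_of_ne hjj'.symm]
          exact key j' hjj'
        · rw [Function.update_of_ne hji]
          rcases eq_or_ne j' i with rfl | hji'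
          · rw [Function.update_self]; exact (key j hji.symm).symm
          · rw [Function.update_of_ne hji']; exact hdisj j j' hjj'
    have hle := hmax _ hGood
    have htot' : tot (Function.update F i (insert s(x, y) (F i))) = tot F + 1 := by
      unfold tot
      have hup : ∀ j, ((Function.update F i (insert s(x, y) (F i))) j).card
          = (Function.update (fun j => (F j).card) i (insert s(x, y) (F i)).card) j :=
        fun j => Function.apply_update (fun _ s => s.card) F i _ j
      rw [Finset.sum_congr rfl (fun j _ => hup j),
        Finset.sum_update_of_mem (Finset.mem_univ i),
        Finset.card_insert_of_notMem (huncov i),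
        Finset.sum_eq_sum_sdiff_singleton_add (Finset.mem_univ i) (fun j => (F j).card)]
      omega
    omega

/-- Every end of an `Aset` edge is connected to `x0` in the graph on `Aset`. -/
lemma reach_ends_conn (he0 : e0 ∈ G.edgeSet) (hsub0 : ∀ i, (↑(F0 i) : Set (Sym2 V)) ⊆ G.edgeSet)
    {x0 y0 : V} (h0 : e0 = s(x0, y0))
    {F : Fin k → Finset (Sym2 V)} {e : Sym2 V} (hR : Reach F0 e0 F e)
    {a : V} (ha : a ∈ e) :
    (fromEdgeSet (Aset F0 e0)).Reachable a x0 := by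
  have hne0 : x0 ≠ y0 := by
    have := G.not_isDiag_of_mem_edgeSet (h0 ▸ he0)
    simpa using this
  induction hR generalizing a with
  | base =>
    subst h0
    rcases Sym2.mem_iff.1 ha with rfl | rfl
    · exact Reachable.refl _
    · exact ((fromEdgeSet_adj _).2 ⟨by rw [Sym2.eq_swap]; exact ⟨F0, Reach.base⟩, hne0.symm⟩).reachable
  | @step F e hR i x y hxy p hp f hf ih =>
    -- a is an end of f, and f lies on p whose edges are all in Aset
    have hpA : ∀ g ∈ p.edges, g ∈ (fromEdgeSet (Aset F0 e0)).edgeSet := by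
      intro g hg
      rw [edgeSet_fromEdgeSet]
      refine ⟨⟨_, Reach.step hR i hxy p hp hg⟩, ?_⟩
      exact (mem_of_mem_fromEdgeSet_edges hg).2
    set pA := p.transfer (fromEdgeSet (Aset F0 e0)) hpA with hpA_def
    have hfA : f ∈ pA.edges := by rw [Walk.edges_transfer]; exact hf
    have haS : a ∈ pA.support := by
      induction f with
      | _ c d =>
        rcases Sym2.mem_iff.1 ha with rfl | rfl
        · exact pA.fst_mem_support_of_mem_edges hfA
        · exact pA.snd_mem_support_of_mem_edges hfA
    have h1 : (fromEdgeSet (Aset F0 e0)).Reachable a x := ⟨(pA.takeUntil a haS).reverse⟩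
    exact h1.trans (ih (a := x) (by rw [hxy]; exact Sym2.mem_mk_left x y))

end Part4

section Part5
variable {V : Type*} [DecidableEq V]
variable {G : SimpleGraph V} {k : ℕ} {F0 : Fin k → Finset (Sym2 V)} {e0 : Sym2 V}

/-- Connectivity inside `F i ∩ Aset` is invariant across reachable states. -/
lemma reach_partition (hG0 : Good G F0) (he0 : e0 ∈ G.edgeSet) (hu0 : ∀ i, e0 ∉ F0 i)
    (hmax : ∀ F : Fin k → Finset (Sym2 V), Good G F → tot F ≤ tot F0)
    {F : Fin k → Finset (Sym2 V)} {e : Sym2 V} (hR : Reach F0 e0 F e)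
    (i : Fin k) (u v : V) :
    (fromEdgeSet ((↑(F i) : Set (Sym2 V)) ∩ Aset F0 e0)).Reachable u v ↔
      (fromEdgeSet ((↑(F0 i) : Set (Sym2 V)) ∩ Aset F0 e0)).Reachable u v := by
  induction hR with
  | base => exact Iff.rfl
  | @step F e hR i' x y hxy p hp f hf ih =>
    rcases ne_or_eq i i' with hii' | rfl
    · rw [Function.update_of_ne hii']
      exact ih
    · subst hxy
      obtain ⟨⟨hsub, hacyc, hdisj⟩, htot, heE, huncov⟩ := reach_invariant hG0 he0 hu0 hR
      have hxyne : x ≠ y := by simpa using G.not_isDiag_of_mem_edgeSet heE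
      obtain ⟨a, b, rfl⟩ : ∃ a b, f = s(a, b) := Sym2.exists.mp ⟨f, rfl⟩
      set A := Aset F0 e0 with hA
      set t : Set (Sym2 V) := (↑(F i) : Set (Sym2 V)) ∩ A with ht
      have heA : s(x, y) ∈ A := ⟨F, hR⟩
      have hpA : ∀ g ∈ p.edges, g ∈ A := fun g hg => ⟨_, Reach.step hR i rfl p hp hg⟩
      have hfFi : s(a, b) ∈ F i ∧ ¬ (s(a, b) : Sym2 V).IsDiag := mem_of_mem_fromEdgeSet_edges hf
      have hfe : s(a, b) ≠ s(x, y) := fun h => huncov i (h ▸ hfFi.1)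
      have hset : (↑(insert s(x, y) ((F i).erase s(a, b))) : Set (Sym2 V)) ∩ A
          = (insert s(x, y) t) \ {s(a, b)} := by
        ext g
        simp only [Finset.coe_insert, Set.mem_inter_iff, Set.mem_insert_iff, Finset.coe_erase,
          Set.mem_diff, Set.mem_singleton_iff, Finset.mem_coe, Finset.mem_erase, ht]
        constructor
        · rintro ⟨h | ⟨h1, h2⟩, hA2⟩
          · exact ⟨Or.inl h, fun hh => hfe (hh ▸ h)⟩
          · exact ⟨Or.inr ⟨h1, hA2⟩, h2⟩
        · rintro ⟨h | ⟨h1, hA2⟩, hne⟩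
          · exact ⟨Or.inl h, h ▸ heA⟩
          · exact ⟨Or.inr ⟨h1, hne⟩, hA2⟩
      -- path q in fromEdgeSet t from x to y
      have hqt : ∀ g ∈ p.edges, g ∈ (fromEdgeSet t).edgeSet := by
        intro g hg
        rw [edgeSet_fromEdgeSet]
        have h2 := mem_of_mem_fromEdgeSet_edges hg
        exact ⟨⟨h2.1, hpA g hg⟩, h2.2⟩
      have hreachxy : (fromEdgeSet t).Reachable x y := ⟨p.transfer _ hqt⟩
      -- lift to H1 := fromEdgeSet (insert s(x,y) t)
      have hins : fromEdgeSet t ≤ fromEdgeSet (insert s(x, y) t) :=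
        fromEdgeSet_mono (Set.subset_insert _ _)
      have hq1 : ∀ g ∈ p.edges, g ∈ (fromEdgeSet (insert s(x, y) t)).edgeSet := by
        intro g hg
        have := hqt g hg
        rw [edgeSet_fromEdgeSet] at this ⊢
        exact ⟨Set.mem_insert_of_mem _ this.1, this.2⟩
      have hqp : (p.transfer _ hq1).IsPath := hp.transfer hq1
      have hadj : (fromEdgeSet (insert s(x, y) t)).Adj y x :=
        (fromEdgeSet_adj _).2 ⟨by rw [Sym2.eq_swap]; exact Set.mem_insert _ _, hxyne.symm⟩
      have hqe : ¬ s(y, x) ∈ ((⟨p.transfer _ hq1, hqp⟩ :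
          (fromEdgeSet (insert s(x, y) t)).Path x y) : (fromEdgeSet (insert s(x, y) t)).Walk x y).edges := by
        intro hmem
        simp only [Walk.edges_transfer] at hmem
        have := (mem_of_mem_fromEdgeSet_edges hmem).1
        rw [Sym2.eq_swap] at this
        exact huncov i this
      have hc := Path.cons_isCycle _ hadj hqe
      have hfc : s(a, b) ∈ (Walk.cons hadj
          (p.transfer _ hq1)).edges := by
        rw [Walk.edges_cons, Walk.edges_transfer]
        exact List.mem_cons_of_mem _ hf
      have hdel := (adj_and_reachable_delete_edges_iff_exists_cycle.2
        ⟨y, Walk.cons hadj (p.transfer _ hq1), hc, hfc⟩).2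
      have hdeq : fromEdgeSet ((insert s(x, y) t) \ {s(a, b)}) =
          (fromEdgeSet (insert s(x, y) t)).deleteEdges {s(a, b)} := by
        rw [fromEdgeSet_sdiff]; rfl
      have hreach_del : (fromEdgeSet ((insert s(x, y) t) \ {s(a, b)})).Reachable a b := by
        rw [hdeq]; exact hdel
      rw [Function.update_self, hset]
      exact (reach_sdiff_iff hreach_del u v).trans
        ((reach_insert_iff hreachxy u v).trans (ih))

end Part5

section Part6
variable {V : Type*}

lemma bot_isAcyclic' : (⊥ : SimpleGraph V).IsAcyclic := by
  intro v c hc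
  cases c with
  | nil => simp [Walk.isCycle_def] at hc
  | cons ha _ => exact ha.elim

lemma card_edgeFinset_eq_ncard {W : Type*} (H : SimpleGraph W) [Fintype H.edgeSet] :
    H.edgeFinset.card = H.edgeSet.ncard := by
  rw [Set.ncard_eq_toFinset_card']
  rfl

/-- A finite set of vertices, all reachable from a root, has at most `|E| + 1` elements. -/
lemma card_le_edges_of_reach [Fintype V] {H : SimpleGraph V}
    [DecidableRel H.Adj] [DecidableEq V] (U : Finset V) (r : V)
    (hU : ∀ u ∈ U, H.Reachable r u) :
    U.card ≤ H.edgeSet.ncard + 1 := by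
  classical
  have hconv : H.edgeSet.ncard = H.edgeFinset.card := (card_edgeFinset_eq_ncard H).symm
  have key : ∀ u : V, ∃ a : V, u ∈ U.erase r → H.Adj u a ∧ H.dist a r < H.dist u r := by
    intro u
    by_cases hu : u ∈ U.erase r
    · have hur : u ≠ r := (Finset.mem_erase.1 hu).1
      have hr : H.Reachable u r := (hU u (Finset.mem_erase.1 hu).2).symm
      obtain ⟨w, hw⟩ := hr.exists_walk_length_eq_dist
      cases w with
      | nil => exact absurd rfl hur
      | @cons _ b _ ha w' =>
        refine ⟨b, fun _ => ⟨ha, ?_⟩⟩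
        have h1 : H.dist b r ≤ w'.length := dist_le w'
        rw [Walk.length_cons] at hw
        omega
    · exact ⟨u, fun h => absurd h hu⟩
  choose g hg using key
  have hcard : (U.erase r).card ≤ H.edgeFinset.card := by
    apply Finset.card_le_card_of_injOn (fun u => s(u, g u))
    · intro u hu
      rw [Finset.mem_coe, mem_edgeFinset]
      exact (hg u hu).1
    · intro u hu v hv heq
      rcases Sym2.eq_iff.1 heq with ⟨h1, _⟩ | ⟨h1, h2⟩
      · exact h1
      · exfalso
        have d1 := (hg u hu).2
        have d2 := (hg v hv).2
        rw [h2] at d1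
        rw [← h1] at d2
        omega
  by_cases hr : r ∈ U
  · have := Finset.card_erase_add_one hr
    omega
  · rw [Finset.erase_eq_of_notMem hr] at hcard
    omega

end Part6

section Part7

lemma arith_helper {c m : ℕ} (h1 : 1 ≤ m) (h2 : m ≤ c) : c * (m - 1) ≤ m * (c - 1) := by
  obtain ⟨m', rfl⟩ : ∃ m', m = m' + 1 := ⟨m - 1, by omega⟩
  obtain ⟨d, rfl⟩ : ∃ d, c = d + 1 := ⟨c - 1, by omega⟩
  simp only [Nat.add_sub_cancel]
  nlinarith [h2]

theorem hasForestPartition_of_degree {V : Type*} [Fintype V] [DecidableEq V]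
    (G : SimpleGraph V) [DecidableRel G.Adj] {k : ℕ}
    (hdeg : G.maxDegree + 1 ≤ 2 * k) : HasForestPartition G k := by
  classical
  have hk1 : 1 ≤ k := by omega
  have hP0 : Good G (fun _ : Fin k => (∅ : Finset (Sym2 V))) := by
    refine ⟨fun i => by simp, fun i => ?_, fun i j _ => by simp⟩
    rw [Finset.coe_empty, fromEdgeSet_empty]
    exact bot_isAcyclic'
  set P : ℕ → Prop := fun n => ∃ F : Fin k → Finset (Sym2 V), Good G F ∧ tot F = n with hP
  have hbound : ∀ n, P n → n ≤ k * G.edgeFinset.card := by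
    rintro n ⟨F, hF, rfl⟩
    calc tot F ≤ ∑ _i : Fin k, G.edgeFinset.card := by
          refine Finset.sum_le_sum fun i _ => Finset.card_le_card fun e he => ?_
          exact mem_edgeFinset.2 (hF.1 i he)
      _ = k * G.edgeFinset.card := by
          rw [Finset.sum_const, Finset.card_univ, Fintype.card_fin, smul_eq_mul]
  obtain ⟨F0, hG0, htot0⟩ : P (Nat.findGreatest P (k * G.edgeFinset.card)) :=
    Nat.findGreatest_spec (Nat.zero_le _) ⟨_, hP0, by simp [tot]⟩
  have hmax : ∀ F : Fin k → Finset (Sym2 V), Good G F → tot F ≤ tot F0 := by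
    intro F hF
    rw [htot0]
    exact Nat.le_findGreatest (hbound _ ⟨F, hF, rfl⟩) ⟨F, hF, rfl⟩
  have hcover : ∀ e ∈ G.edgeSet, ∃ i, e ∈ F0 i := by
    by_contra hcon
    push_neg at hcon
    obtain ⟨e0, he0, hu0⟩ := hcon
    obtain ⟨x0, y0, rfl⟩ : ∃ a b, e0 = s(a, b) := Sym2.exists.mp ⟨e0, rfl⟩
    have hxyne : x0 ≠ y0 := by simpa using G.not_isDiag_of_mem_edgeSet he0
    set A : Set (Sym2 V) := Aset F0 s(x0, y0) with hA
    have hAsub : A ⊆ G.edgeSet := by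
      rintro e ⟨F, hR⟩
      exact (reach_invariant hG0 he0 hu0 hR).2.2.1
    have hAfin : A.Finite := Set.Finite.subset (Set.toFinite _) hAsub
    set Af : Finset (Sym2 V) := hAfin.toFinset with hAf
    set HA : SimpleGraph V := fromEdgeSet A with hHA
    have hHAG : HA ≤ G := by
      have := fromEdgeSet_mono hAsub
      rwa [fromEdgeSet_edgeSet] at this
    set U : Finset V := Finset.univ.filter (fun v => ∃ w, HA.Adj v w) with hU
    have hmemU : ∀ {v w : V}, HA.Adj v w → v ∈ U := by
      intro v w h
      rw [hU, Finset.mem_filter]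
      exact ⟨Finset.mem_univ _, ⟨w, h⟩⟩
    have he0A : (s(x0, y0) : Sym2 V) ∈ A := ⟨F0, Reach.base⟩
    have hadj0 : HA.Adj x0 y0 := (fromEdgeSet_adj _).2 ⟨he0A, hxyne⟩
    have hx0U : x0 ∈ U := hmemU hadj0
    have hreachA : ∀ u ∈ U, HA.Reachable x0 u := by
      intro u hu
      rw [hU, Finset.mem_filter] at hu
      obtain ⟨-, w, hw⟩ := hu
      have hmem : s(u, w) ∈ A := ((fromEdgeSet_adj _).1 hw).1
      obtain ⟨F, hR⟩ := hmem
      exact (reach_ends_conn he0 hG0.1 rfl hR (Sym2.mem_mk_left u w)).symm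
    have hAdjReach : ∀ i : Fin k, ∀ a b : V, HA.Adj a b →
        (fromEdgeSet ((↑(F0 i) : Set (Sym2 V)) ∩ A)).Reachable a b := by
      intro i a b hab
      rw [hHA, fromEdgeSet_adj] at hab
      obtain ⟨⟨F, hR⟩, hne⟩ := hab
      obtain ⟨p, hp⟩ := reach_keyconn hG0 he0 hu0 hmax hR rfl i
      have hpe : ∀ g ∈ p.edges, g ∈ (fromEdgeSet ((↑(F i) : Set (Sym2 V)) ∩ A)).edgeSet := by
        intro g hg
        rw [edgeSet_fromEdgeSet]
        have h2 := mem_of_mem_fromEdgeSet_edges hg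
        exact ⟨⟨h2.1, ⟨_, Reach.step hR i rfl p hp hg⟩⟩, h2.2⟩
      have hr : (fromEdgeSet ((↑(F i) : Set (Sym2 V)) ∩ A)).Reachable a b := ⟨p.transfer _ hpe⟩
      exact (reach_partition hG0 he0 hu0 hmax hR i a b).1 hr
    have hconn : ∀ i : Fin k, ∀ u ∈ U,
        (fromEdgeSet ((↑(F0 i) : Set (Sym2 V)) ∩ A)).Reachable x0 u :=
      fun i u hu => reach_of_adj_reach (fun a b => hAdjReach i a b) (hreachA u hu)
    have hedgecount : ∀ i : Fin k,
        (fromEdgeSet ((↑(F0 i) : Set (Sym2 V)) ∩ A)).edgeSet = ↑(F0 i ∩ Af) := by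
      intro i
      rw [edgeSet_fromEdgeSet, Finset.coe_inter, hAfin.coe_toFinset]
      ext g
      constructor
      · rintro ⟨⟨h1, h2⟩, -⟩
        exact ⟨h1, h2⟩
      · rintro ⟨h1, h2⟩
        exact ⟨⟨h1, h2⟩, G.not_isDiag_of_mem_edgeSet (hAsub h2)⟩
    have hsize : ∀ i : Fin k, U.card ≤ (F0 i ∩ Af).card + 1 := by
      intro i
      have h := card_le_edges_of_reach U x0 (hconn i)
      rwa [hedgecount i, Set.ncard_coe_finset] at h
    have hsum : ∑ i : Fin k, (F0 i ∩ Af).card + 1 ≤ Af.card := by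
      have hdisj2 : ∀ i ∈ Finset.univ, ∀ j ∈ Finset.univ, i ≠ j →
          Disjoint ((fun i => F0 i ∩ Af) i) ((fun i => F0 i ∩ Af) j) := fun i _ j _ hij =>
        Finset.disjoint_of_subset_left Finset.inter_subset_left
          (Finset.disjoint_of_subset_right Finset.inter_subset_left (hG0.2.2 i j hij))
      have hbu := (Finset.card_biUnion hdisj2).symm
      have hsub2 : (Finset.univ.biUnion fun i => F0 i ∩ Af) ⊆ Af.erase s(x0, y0) := by
        intro g hg
        rw [Finset.mem_biUnion] at hg
        obtain ⟨i, -, hgi⟩ := hg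
        rw [Finset.mem_inter] at hgi
        rw [Finset.mem_erase]
        exact ⟨fun h => hu0 i (h ▸ hgi.1), hgi.2⟩
      have hle := Finset.card_le_card hsub2
      have he0Af : (s(x0, y0) : Sym2 V) ∈ Af := hAfin.mem_toFinset.2 he0A
      have hca := Finset.card_erase_add_one he0Af
      omega
    have hedgeHA : HA.edgeSet = ↑Af := by
      rw [hHA, edgeSet_fromEdgeSet, hAfin.coe_toFinset]
      ext g
      constructor
      · rintro ⟨h1, -⟩
        exact h1
      · intro h
        exact ⟨h, G.not_isDiag_of_mem_edgeSet (hAsub h)⟩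
    have hdegsum : ∑ v ∈ U, HA.degree v = 2 * Af.card := by
      have h2e := sum_degrees_eq_twice_card_edges HA
      rw [card_edgeFinset_eq_ncard, hedgeHA, Set.ncard_coe_finset] at h2e
      rw [Finset.sum_subset (Finset.subset_univ U) ?_]
      · exact h2e
      · intro v _ hv
        rw [← card_neighborFinset_eq_degree, Finset.card_eq_zero,
          Finset.eq_empty_iff_forall_notMem]
        intro w hw
        rw [mem_neighborFinset] at hw
        exact hv (hmemU hw)
    have hdegU : ∀ v ∈ U, HA.degree v ≤ U.card - 1 := by
      intro v hv
      have hsubN : HA.neighborFinset v ⊆ U.erase v := by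
        intro w hw
        rw [mem_neighborFinset] at hw
        rw [Finset.mem_erase]
        exact ⟨fun h => HA.loopless.irrefl v (h ▸ hw), hmemU hw.symm⟩
      have h1 := Finset.card_le_card hsubN
      rw [card_neighborFinset_eq_degree] at h1
      have h2 := Finset.card_erase_of_mem hv
      omega
    have hdegD : ∀ v : V, HA.degree v ≤ G.maxDegree := by
      intro v
      have hsubN : HA.neighborFinset v ⊆ G.neighborFinset v := by
        intro w hw
        rw [mem_neighborFinset] at hw ⊢
        exact hHAG hw
      have h1 := Finset.card_le_card hsubN
      rw [card_neighborFinset_eq_degree, card_neighborFinset_eq_degree] at h1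
      exact le_trans h1 (G.degree_le_maxDegree v)
    have hc1 : 1 ≤ U.card := Finset.card_pos.2 ⟨x0, hx0U⟩
    have hkey : 2 * Af.card ≤ 2 * k * (U.card - 1) := by
      rcases le_or_gt U.card (2 * k) with hcase | hcase
      · calc 2 * Af.card = ∑ v ∈ U, HA.degree v := hdegsum.symm
          _ ≤ ∑ _v ∈ U, (U.card - 1) := Finset.sum_le_sum (fun v hv => hdegU v hv)
          _ = U.card * (U.card - 1) := by rw [Finset.sum_const, smul_eq_mul]
          _ ≤ 2 * k * (U.card - 1) := Nat.mul_le_mul hcase (le_refl _)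
      · calc 2 * Af.card = ∑ v ∈ U, HA.degree v := hdegsum.symm
          _ ≤ ∑ _v ∈ U, (2 * k - 1) :=
            Finset.sum_le_sum (fun v _ => by have := hdegD v; omega)
          _ = U.card * (2 * k - 1) := by rw [Finset.sum_const, smul_eq_mul]
          _ ≤ 2 * k * (U.card - 1) := arith_helper (by omega) (by omega)
    have hsumlow : k * (U.card - 1) ≤ ∑ i : Fin k, (F0 i ∩ Af).card := by
      calc k * (U.card - 1) = ∑ _i : Fin k, (U.card - 1) := by
            rw [Finset.sum_const, Finset.card_univ, Fintype.card_fin, smul_eq_mul]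
        _ ≤ _ := Finset.sum_le_sum (fun i _ => by have := hsize i; omega)
    have hassoc : 2 * k * (U.card - 1) = 2 * (k * (U.card - 1)) := by ring
    omega
  have hchoice : ∀ e : G.edgeSet, ∃ i, (e : Sym2 V) ∈ F0 i := fun e => hcover e e.2
  choose f hf using hchoice
  refine ⟨f, fun i => ?_⟩
  refine IsAcyclic.anti ?_ (hG0.2.1 i)
  apply fromEdgeSet_mono
  rintro g ⟨hg, hfg⟩
  exact Finset.mem_coe.2 (hfg ▸ hf ⟨g, hg⟩)

end Part7


end ArboricityAux

/-- For every finite simple graph `G` with maximum degree `Δ`, the arboricity of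
`G` is at most `⌈(Δ + 1)/2⌉`. -/
theorem stmt3 {V : Type*} [Fintype V] (G : SimpleGraph V) [DecidableRel G.Adj] :
    arboricity G ≤ Nat.ceil (((G.maxDegree : ℚ) + 1) / 2) := by
  classical
  apply Nat.sInf_le
  show HasForestPartition G _
  apply hasForestPartition_of_degree
  have h1 : ((G.maxDegree : ℚ) + 1) / 2 ≤ (Nat.ceil (((G.maxDegree : ℚ) + 1) / 2) : ℚ) :=
    Nat.le_ceil _
  have h2 : ((G.maxDegree : ℚ) + 1) ≤ 2 * (Nat.ceil (((G.maxDegree : ℚ) + 1) / 2) : ℚ) := by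
    linarith
  exact_mod_cast h2
end

section
/- Nash-Williams formula: for a finite simple graph G with at least 2 vertices, the arboricity of G equals the maximum over all vertex subsets S with |S| ≥ 2 of ⌈|E(S)| / (|S| − 1)⌉, where E(S) is the set of edges of G with both endpoints in S. -/
namespace NWproof

open SimpleGraph Finset

variable {V : Type*} [DecidableEq V]

/-- graph of an edge finset -/
abbrev gph (F : Finset (Sym2 V)) : SimpleGraph V := SimpleGraph.fromEdgeSet ↑F

lemma gph_adj {F : Finset (Sym2 V)} {a b : V} : (gph F).Adj a b ↔ s(a,b) ∈ F ∧ a ≠ b := by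
  simp [SimpleGraph.fromEdgeSet_adj]

lemma gph_mono {F F' : Finset (Sym2 V)} (h : F ⊆ F') : gph F ≤ gph F' :=
  SimpleGraph.fromEdgeSet_mono (by exact_mod_cast h)

lemma acyclic_anti {G G' : SimpleGraph V} (hle : G ≤ G') (h : G'.IsAcyclic) : G.IsAcyclic := by
  intro v c hc
  exact h (c.mapLe hle) ((SimpleGraph.Walk.mapLe_isCycle hle).2 hc)

/-- descend reachability along edgewise-reachable inclusion -/
lemma reach_descend {G G' : SimpleGraph V} (h : ∀ a b : V, G'.Adj a b → G.Reachable a b)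
    {x y : V} (hr : G'.Reachable x y) : G.Reachable x y := by
  obtain ⟨w⟩ := hr
  induction w with
  | nil => exact SimpleGraph.Reachable.refl _
  | cons h' p ih => exact (h _ _ h').trans ih

/-- removing one edge of a trail: both sides remain reachable to the ends, in one of
the two orders. -/
lemma split_trail {G : SimpleGraph V} {x y a b : V} (w : G.Walk x y) (hw : w.IsTrail)
    (he : s(a,b) ∈ w.edges) :
    ((G.deleteEdges {s(a,b)}).Reachable x a ∧ (G.deleteEdges {s(a,b)}).Reachable b y) ∨
    ((G.deleteEdges {s(a,b)}).Reachable x b ∧ (G.deleteEdges {s(a,b)}).Reachable a y) := by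
  induction w with
  | nil => simp at he
  | @cons u c y h' p ih =>
    rw [SimpleGraph.Walk.edges_cons, List.mem_cons] at he
    have hw' : p.IsTrail := hw.of_cons
    rcases he with he | he
    · -- first edge is the removed one
      have hnot : s(a,b) ∉ p.edges := by
        have := hw.edges_nodup
        rw [SimpleGraph.Walk.edges_cons] at this
        rw [he]
        exact (List.nodup_cons.1 this).1
      have hcy : (G.deleteEdges {s(a,b)}).Reachable c y :=
        ⟨p.toDeleteEdges _ (by intro e hme; simp; rintro rfl; exact hnot hme)⟩
      rw [Sym2.eq_iff] at he
      rcases he with ⟨rfl, rfl⟩ | ⟨rfl, rfl⟩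
      · exact Or.inl ⟨SimpleGraph.Reachable.refl _, hcy⟩
      · exact Or.inr ⟨SimpleGraph.Reachable.refl _, hcy⟩
    · have hne : s(u,c) ≠ s(a,b) := by
        intro hcontra
        have := hw.edges_nodup
        rw [SimpleGraph.Walk.edges_cons] at this
        exact (List.nodup_cons.1 this).1 (hcontra ▸ he)
      have hadj : (G.deleteEdges {s(a,b)}).Adj u c := by
        rw [SimpleGraph.deleteEdges_adj]
        exact ⟨h', by simpa using hne⟩
      rcases ih hw' he with ⟨h1, h2⟩ | ⟨h1, h2⟩
      · exact Or.inl ⟨(SimpleGraph.Adj.reachable hadj).trans h1, h2⟩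
      · exact Or.inr ⟨(SimpleGraph.Adj.reachable hadj).trans h1, h2⟩

lemma gph_insert_sdiff {F : Finset (Sym2 V)} {f : Sym2 V} (hf : f ∉ F) :
    gph (insert f F) \ SimpleGraph.fromEdgeSet {f} = gph F := by
  ext a b
  simp only [SimpleGraph.sdiff_adj, SimpleGraph.fromEdgeSet_adj, Finset.coe_insert,
    Set.mem_insert_iff, Finset.mem_coe, Set.mem_singleton_iff, not_and, not_not]
  constructor
  · rintro ⟨⟨hmem | hmem, hne⟩, hnot⟩
    · exact absurd (hnot hmem) hne
    · exact ⟨hmem, hne⟩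
  · rintro ⟨hmem, hne⟩
    exact ⟨⟨Or.inr hmem, hne⟩, fun heq => absurd (heq ▸ hmem) hf⟩

/-- a cycle in `gph (insert f F)` yields a cycle below or a reachability between
the ends of `f`. -/
lemma cycle_insert {F : Finset (Sym2 V)} {x y : V} (hxy : x ≠ y) (hf : s(x,y) ∉ F)
    {v : V} (c : (gph (insert s(x,y) F)).Walk v v) (hc : c.IsCycle) :
    (∃ (u : V) (c' : (gph F).Walk u u), c'.IsCycle) ∨ (gph F).Reachable x y := by
  by_cases hmem : s(x,y) ∈ c.edges
  · right
    have hadj : (gph (insert s(x,y) F)).Adj x y := by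
      rw [gph_adj]
      exact ⟨Finset.mem_insert_self _ _, hxy⟩
    have := (SimpleGraph.adj_and_reachable_delete_edges_iff_exists_cycle (G := gph (insert s(x,y) F))
      (v := x) (w := y)).2 ⟨v, c, hc, hmem⟩
    have h2 := this.2
    rwa [SimpleGraph.deleteEdges, gph_insert_sdiff hf] at h2
  · left
    have heq : (gph (insert s(x,y) F)).deleteEdges {s(x,y)} = gph F := by
      rw [SimpleGraph.deleteEdges]
      exact gph_insert_sdiff hf
    rw [← heq]
    have hsub : ∀ e ∈ c.edges, e ∉ ({s(x,y)} : Set (Sym2 V)) := by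
      intro e hme
      simp only [Set.mem_singleton_iff]
      rintro rfl
      exact hmem hme
    exact ⟨v, c.toDeleteEdges {s(x,y)} hsub, hc.transfer _⟩

/-- transfer a walk to a larger edge finset -/
def wtransfer {F F' : Finset (Sym2 V)} (h : F ⊆ F') {a b : V} (p : (gph F).Walk a b) :
    (gph F').Walk a b :=
  p.transfer (gph F') (fun e he => SimpleGraph.edgeSet_mono (gph_mono h) (p.edges_subset_edgeSet he))

lemma wtransfer_edges {F F' : Finset (Sym2 V)} (h : F ⊆ F') {a b : V} (p : (gph F).Walk a b) :
    (wtransfer h p).edges = p.edges := p.edges_transfer _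

/-- adding an edge whose ends are not reachable keeps the graph acyclic. -/
lemma insert_acyclic_of_not_reachable {F : Finset (Sym2 V)} {x y : V} (hxy : x ≠ y)
    (hF : (gph F).IsAcyclic) (hreach : ¬(gph F).Reachable x y) :
    (gph (insert s(x,y) F)).IsAcyclic := by
  have hf : s(x,y) ∉ F := fun hm => hreach (SimpleGraph.Adj.reachable (gph_adj.2 ⟨hm, hxy⟩))
  intro v c hc
  rcases cycle_insert hxy hf c hc with ⟨u, c', hc'⟩ | hr
  · exact hF c' hc'
  · exact hreach hr

/-- swapping an edge of a path for the closing edge keeps the graph acyclic. -/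
lemma swap_acyclic {F : Finset (Sym2 V)} {x y : V} {e' : Sym2 V} (hxy : x ≠ y)
    (hF : (gph F).IsAcyclic) (hf : s(x,y) ∉ F)
    (w : (gph F).Walk x y) (hw : w.IsPath) (he' : e' ∈ w.edges) :
    (gph (insert s(x,y) (F.erase e'))).IsAcyclic := by
  have hfe : s(x,y) ∉ F.erase e' := fun hm => hf (Finset.mem_of_mem_erase hm)
  intro v c hc
  rcases cycle_insert hxy hfe c hc with ⟨u, c', hc'⟩ | hr
  · exact acyclic_anti (gph_mono (Finset.erase_subset _ _)) hF c' hc'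
  · obtain ⟨q⟩ := hr
    set q1 := q.toPath.1 with hq1
    have hq1p : q1.IsPath := q.toPath.2
    set q2 := wtransfer (Finset.erase_subset e' F) q1 with hq2def
    have hq2p : q2.IsPath := hq1p.transfer _
    have huniq : (⟨w, hw⟩ : (gph F).Path x y) = ⟨q2, hq2p⟩ := hF.path_unique _ _
    have he'q : e' ∉ q2.edges := by
      rw [hq2def, wtransfer_edges]
      intro hmem
      have := q1.edges_subset_edgeSet (hmem)
      rw [SimpleGraph.edgeSet_fromEdgeSet] at this
      exact Finset.notMem_erase e' F (by exact_mod_cast this.1)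
    rw [Subtype.mk.injEq] at huniq
    rw [huniq] at he'
    exact he'q he'

/-- the key exchange lemma: swapping an edge of a trail joining `x,y` for the new edge
`s(x,y)` does not change the reachability relation. -/
lemma swap_reach {F : Finset (Sym2 V)} {x y : V} {e' : Sym2 V} (hxy : x ≠ y) (hf : s(x,y) ∉ F)
    (w : (gph F).Walk x y) (hw : w.IsTrail) (he' : e' ∈ w.edges) (a b : V) :
    (gph (insert s(x,y) (F.erase e'))).Reachable a b ↔ (gph F).Reachable a b := by
  constructor
  · refine fun hr => reach_descend (fun p q hpq => ?_) hr
    rw [gph_adj] at hpq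
    rcases Finset.mem_insert.1 hpq.1 with heq | hmem
    · rw [Sym2.eq_iff] at heq
      rcases heq with ⟨rfl, rfl⟩ | ⟨rfl, rfl⟩
      · exact ⟨w⟩
      · exact ⟨w.reverse⟩
    · exact SimpleGraph.Adj.reachable (gph_adj.2 ⟨Finset.mem_of_mem_erase hmem, hpq.2⟩)
  · refine fun hr => reach_descend (fun p q hpq => ?_) hr
    rw [gph_adj] at hpq
    by_cases heq : s(p,q) = e'
    · have hle : (gph F).deleteEdges {e'} ≤ gph (insert s(x,y) (F.erase e')) := by
        intro c d hcd
        rw [SimpleGraph.deleteEdges_adj] at hcd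
        rw [gph_adj] at hcd ⊢
        refine ⟨Finset.mem_insert.2 (Or.inr (Finset.mem_erase.2 ⟨by simpa using hcd.2, hcd.1.1⟩)),
          hcd.1.2⟩
      have hadjxy : (gph (insert s(x,y) (F.erase e'))).Adj x y :=
        gph_adj.2 ⟨Finset.mem_insert_self _ _, hxy⟩
      have hsplit := split_trail w hw (a := p) (b := q) (by rw [heq]; exact he')
      rw [heq] at hsplit
      rcases hsplit with ⟨h1, h2⟩ | ⟨h1, h2⟩
      · exact ((h1.mono hle).symm.trans hadjxy.reachable).trans (h2.mono hle).symm
      · exact ((h2.mono hle).trans hadjxy.symm.reachable).trans (h1.mono hle)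
    · exact SimpleGraph.Adj.reachable
        (gph_adj.2 ⟨Finset.mem_insert.2 (Or.inr (Finset.mem_erase.2 ⟨heq, hpq.1⟩)), hpq.2⟩)

section Counting

/-- lift an edge finset inside `S` to the subtype -/
def liftF (S : Finset V) (F : Finset (Sym2 V)) : Finset (Sym2 {x // x ∈ S}) :=
  Finset.univ.filter (fun et => et.map Subtype.val ∈ F)

lemma liftF_card {S : Finset V} {F : Finset (Sym2 V)} (hin : ∀ e ∈ F, ∀ v ∈ e, v ∈ S) :
    (liftF S F).card = F.card := by
  refine Finset.card_bij (fun et _ => et.map Subtype.val) (fun et he => ?_) (fun et h1 et' h2 h => ?_)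
    (fun e he => ?_)
  · exact (Finset.mem_filter.1 he).2
  · exact Sym2.map.injective Subtype.val_injective h
  · induction e with
    | _ a b =>
      have ha : a ∈ S := hin _ he a (by simp)
      have hb : b ∈ S := hin _ he b (by simp)
      exact ⟨s(⟨a, ha⟩, ⟨b, hb⟩), Finset.mem_filter.2 ⟨Finset.mem_univ _, by
        rw [Sym2.map_pair_eq]; exact he⟩, by simp [Sym2.map_pair_eq]⟩

lemma liftF_acyclic {S : Finset V} {F : Finset (Sym2 V)}
    (hac : (gph F).IsAcyclic) : (gph (liftF S F)).IsAcyclic := by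
  intro v c hc
  let φ : gph (liftF S F) →g gph F :=
    ⟨Subtype.val, fun {at1 bt1} h => by
      rw [gph_adj] at h ⊢
      refine ⟨?_, Subtype.val_injective.ne h.2⟩
      have h2 := (Finset.mem_filter.1 h.1).2
      rwa [Sym2.map_pair_eq] at h2⟩
  exact hac (c.map φ)
    ((SimpleGraph.Walk.map_isCycle_iff_of_injective (by exact Subtype.val_injective)).2 hc)

lemma walk_to_subtype {S : Finset V} {F : Finset (Sym2 V)} (hin : ∀ e ∈ F, ∀ v ∈ e, v ∈ S)
    {a b : V} (w : (gph F).Walk a b) (ha : a ∈ S) (hb : b ∈ S) :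
    (gph (liftF S F)).Reachable ⟨a, ha⟩ ⟨b, hb⟩ := by
  induction w with
  | nil => exact SimpleGraph.Reachable.refl _
  | @cons u c y h p ih =>
    have hmem : s(u,c) ∈ F := (gph_adj.1 h).1
    have hc : c ∈ S := hin _ hmem c (by simp)
    refine SimpleGraph.Reachable.trans (SimpleGraph.Adj.reachable ?_) (ih hc hb)
    rw [gph_adj]
    constructor
    · simp only [liftF, Finset.mem_filter]
      exact ⟨Finset.mem_univ _, by rw [Sym2.map_pair_eq]; exact hmem⟩
    · intro hcontra
      exact (gph_adj.1 h).2 (congrArg Subtype.val hcontra)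

/-- The edge finset of `gph F` is `F` when all of `F` is non-diagonal. -/
lemma gph_edgeSet {F : Finset (Sym2 V)} (hnd : ∀ e ∈ F, ¬e.IsDiag) :
    (gph F).edgeSet = ↑F := by
  rw [SimpleGraph.edgeSet_fromEdgeSet]
  ext e
  simp only [Set.mem_diff, Finset.mem_coe, Set.mem_setOf_eq, and_iff_left_iff_imp]
  exact fun he => hnd e he

/-- forest edge bound: an acyclic graph on a nonempty fintype has at most `card - 1` edges -/
lemma forest_bound {W : Type*} [Fintype W] [DecidableEq W] (F : Finset (Sym2 W))
    (hnd : ∀ e ∈ F, ¬e.IsDiag) (hac : (gph F).IsAcyclic) (hne : Nonempty W) :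
    F.card + 1 ≤ Fintype.card W := by
  classical
  let P : Finset (Sym2 W) → Prop := fun F' => F ⊆ F' ∧ (∀ e ∈ F', ¬e.IsDiag) ∧ (gph F').IsAcyclic
  have hPF : F ∈ Finset.univ.filter (fun F' => P F') := by
    simp only [Finset.mem_filter, Finset.mem_univ, true_and, P]
    exact ⟨Finset.Subset.refl _, hnd, hac⟩
  obtain ⟨M, hM, hMmax⟩ := Finset.exists_max_image _ Finset.card ⟨F, hPF⟩
  simp only [Finset.mem_filter, Finset.mem_univ, true_and, P] at hM
  obtain ⟨hFM, hMnd, hMac⟩ := hM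
  -- M is connected
  have hconn : (gph M).Preconnected := by
    intro x y
    by_contra hreach
    have hxy : x ≠ y := fun h => hreach (h ▸ SimpleGraph.Reachable.refl x)
    have hnotmem : s(x,y) ∉ M := fun hm =>
      hreach (SimpleGraph.Adj.reachable (gph_adj.2 ⟨hm, hxy⟩))
    have hP' : insert s(x,y) M ∈ Finset.univ.filter (fun F' => P F') := by
      simp only [Finset.mem_filter, Finset.mem_univ, true_and, P]
      refine ⟨hFM.trans (Finset.subset_insert _ _), ?_,
        insert_acyclic_of_not_reachable hxy hMac hreach⟩
      intro e he
      rcases Finset.mem_insert.1 he with rfl | he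
      · simpa using hxy
      · exact hMnd e he
    have := hMmax _ hP'
    rw [Finset.card_insert_of_notMem hnotmem] at this
    omega
  have htree : (gph M).IsTree := by
    refine ⟨?_, hMac⟩
    rw [SimpleGraph.connected_iff]
    exact ⟨hconn, hne⟩
  haveI : Fintype ↑(gph M).edgeSet := (Set.toFinite _).fintype
  have hcard := htree.card_edgeFinset
  have hedge : (gph M).edgeFinset = M := by
    ext e
    rw [SimpleGraph.mem_edgeFinset, gph_edgeSet hMnd, Finset.mem_coe]
  rw [hedge] at hcard
  have := hMmax _ hPF
  omega

/-- acyclic graph structure inside `S` has at most `|S| - 1` edges. -/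
lemma card_le_of_acyclic_inside {S : Finset V} (hS : S.Nonempty) (F : Finset (Sym2 V))
    (hnd : ∀ e ∈ F, ¬e.IsDiag) (hin : ∀ e ∈ F, ∀ v ∈ e, v ∈ S)
    (hac : (gph F).IsAcyclic) : F.card + 1 ≤ S.card := by
  have := forest_bound (liftF S F) ?_ (liftF_acyclic hac) ?_
  · rwa [liftF_card hin, Fintype.card_coe] at this
  · intro e he
    simp only [liftF, Finset.mem_filter] at he
    induction e with
    | _ a b =>
      intro hdiag
      rw [Sym2.mk_isDiag_iff] at hdiag
      subst hdiag
      exact hnd _ he.2 (by rw [Sym2.map_pair_eq]; exact Sym2.mk_isDiag_iff.2 rfl)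
  · obtain ⟨x, hx⟩ := hS
    exact ⟨⟨x, hx⟩⟩

/-- spanning tree inside `S` has exactly `|S| - 1` edges: here the direction we need. -/
lemma card_ge_of_connected_inside {S : Finset V} (hS : S.Nonempty) (F : Finset (Sym2 V))
    (hnd : ∀ e ∈ F, ¬e.IsDiag) (hin : ∀ e ∈ F, ∀ v ∈ e, v ∈ S)
    (hac : (gph F).IsAcyclic)
    (hconn : ∀ a b, a ∈ S → b ∈ S → (gph F).Reachable a b) : S.card = F.card + 1 := by
  classical
  have hne : Nonempty {x // x ∈ S} := ⟨⟨hS.choose, hS.choose_spec⟩⟩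
  have htree : (gph (liftF S F)).IsTree := by
    refine ⟨?_, liftF_acyclic hac⟩
    rw [SimpleGraph.connected_iff]
    refine ⟨fun a b => ?_, hne⟩
    obtain ⟨w⟩ := hconn a.1 b.1 a.2 b.2
    have := walk_to_subtype hin w a.2 b.2
    simpa using this
  haveI : Fintype ↑(gph (liftF S F)).edgeSet := (Set.toFinite _).fintype
  have hcard := htree.card_edgeFinset
  have hedge : (gph (liftF S F)).edgeFinset = liftF S F := by
    ext e
    rw [SimpleGraph.mem_edgeFinset, gph_edgeSet, Finset.mem_coe]
    intro et het
    simp only [liftF, Finset.mem_filter] at het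
    induction et with
    | _ a b =>
      intro hdiag
      rw [Sym2.mk_isDiag_iff] at hdiag
      exact hnd _ het.2 (by rw [Sym2.map_pair_eq, hdiag]; exact Sym2.mk_isDiag_iff.2 rfl)
  rw [hedge, liftF_card hin, Fintype.card_coe] at hcard
  omega

end Counting

section Augment

variable {k : ℕ}

lemma mem_support_of_mem_edges {G : SimpleGraph V} {a b z : V} {w : G.Walk a b}
    {e : Sym2 V} (he : e ∈ w.edges) (hz : z ∈ e) : z ∈ w.support := by
  induction e with
  | _ p q =>
    rcases Sym2.mem_iff.1 hz with rfl | rfl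
    · exact w.fst_mem_support_of_mem_edges he
    · exact w.snd_mem_support_of_mem_edges he

lemma edge_mem_of_mem_edges {F : Finset (Sym2 V)} {a b : V} {w : (gph F).Walk a b} {e : Sym2 V}
    (h : e ∈ w.edges) : e ∈ F ∧ ¬e.IsDiag := by
  have := w.edges_subset_edgeSet h
  rw [SimpleGraph.edgeSet_fromEdgeSet] at this
  exact ⟨by exact_mod_cast this.1, this.2⟩

/-- the color classes of a state `(coloring, pending edge)` -/
def cls (E' : Finset (Sym2 V)) (σ : (Sym2 V → Fin k) × Sym2 V) (i : Fin k) :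
    Finset (Sym2 V) := (E'.erase σ.2).filter (fun e => σ.1 e = i)

lemma mem_cls {E' : Finset (Sym2 V)} {σ : (Sym2 V → Fin k) × Sym2 V} {i : Fin k}
    {e : Sym2 V} : e ∈ cls E' σ i ↔ e ∈ E' ∧ e ≠ σ.2 ∧ σ.1 e = i := by
  simp only [cls, Finset.mem_filter, Finset.mem_erase]
  tauto

/-- a valid state: pending edge in `E'`, all classes acyclic -/
def Good (E' : Finset (Sym2 V)) (σ : (Sym2 V → Fin k) × Sym2 V) : Prop :=
  σ.2 ∈ E' ∧ ∀ i, (gph (cls E' σ i)).IsAcyclic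

/-- an exchange step -/
def Step (E' : Finset (Sym2 V)) (σ τ : (Sym2 V → Fin k) × Sym2 V) : Prop :=
  ∃ (i : Fin k) (x y : V) (w : (gph (cls E' σ i)).Walk x y),
    w.IsPath ∧ σ.2 = s(x,y) ∧ x ≠ y ∧ τ.2 ∈ w.edges ∧
    τ.1 = (fun e => if e = σ.2 then i else σ.1 e)

lemma cls_update_eq {E' : Finset (Sym2 V)} {c : Sym2 V → Fin k} {f e' : Sym2 V} {i : Fin k}
    (hf : f ∈ E') (he' : e' ∈ cls E' (c, f) i) :
    (cls E' ((fun e => if e = f then i else c e), e') i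
        = insert f ((cls E' (c, f) i).erase e'))
    ∧ ∀ j, j ≠ i → cls E' ((fun e => if e = f then i else c e), e') j = cls E' (c, f) j := by
  rw [mem_cls] at he'
  obtain ⟨he'E, he'f, he'c⟩ := he'
  constructor
  · ext e
    rw [mem_cls, Finset.mem_insert, Finset.mem_erase, mem_cls]
    by_cases hef : e = f
    · subst hef
      simp only [if_pos rfl]
      tauto
    · simp only [if_neg hef]
      constructor
      · rintro ⟨h1, h2, h3⟩
        exact Or.inr ⟨h2, h1, hef, h3⟩
      · rintro (rfl | ⟨h1, h2, _, h4⟩)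
        · exact absurd rfl hef
        · exact ⟨h2, h1, h4⟩
  · intro j hji
    ext e
    rw [mem_cls, mem_cls]
    by_cases hef : e = f
    · subst hef
      simp only [if_pos rfl]
      constructor
      · rintro ⟨_, _, rfl⟩; exact absurd rfl hji
      · rintro ⟨_, h2, _⟩; exact absurd rfl h2
    · simp only [if_neg hef]
      constructor
      · rintro ⟨h1, _, h3⟩
        exact ⟨h1, hef, h3⟩
      · rintro ⟨h1, _, h3⟩
        refine ⟨h1, fun hee' => ?_, h3⟩
        subst hee'
        exact hji (he'c ▸ h3.symm) |>.elim

lemma good_step {E' : Finset (Sym2 V)} {σ τ : (Sym2 V → Fin k) × Sym2 V}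
    (hgood : Good E' σ) (hstep : Step E' σ τ) : Good E' τ := by
  obtain ⟨i, x, y, w, hwp, hσ2, hxy, hτ2, hτ1⟩ := hstep
  have hτcls : τ.2 ∈ cls E' σ i := (edge_mem_of_mem_edges hτ2).1
  have hkey := cls_update_eq (c := σ.1) (f := σ.2) (e' := τ.2) (i := i) hgood.1 hτcls
  constructor
  · exact (mem_cls.1 hτcls).1
  · intro j
    by_cases hji : j = i
    · subst hji
      have heq : cls E' τ j = insert σ.2 ((cls E' σ j).erase τ.2) := by
        have h1 := hkey.1
        rw [← hτ1] at h1
        exact h1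
      rw [heq, hσ2]
      refine swap_acyclic hxy (hgood.2 j) ?_ w hwp hτ2
      rw [← hσ2]
      exact fun hc => (mem_cls.1 hc).2.1 rfl
    · have heq : cls E' τ j = cls E' σ j := by
        have h1 := hkey.2 j hji
        rw [← hτ1] at h1
        exact h1
      rw [heq]
      exact hgood.2 j

/-- The augmentation lemma: a forest partition of `E' - e₀` extends to one of `E'`,
given the sparsity condition. -/
theorem augment [Fintype V] {E' : Finset (Sym2 V)} (hnd : ∀ e ∈ E', ¬e.IsDiag)
    (hsp : ∀ S : Finset V, (E'.filter (fun e => ∀ v ∈ e, v ∈ S)).card ≤ k * (S.card - 1))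
    {e₀ : Sym2 V} (he₀ : e₀ ∈ E') {c₀ : Sym2 V → Fin k}
    (hc₀ : ∀ i, (gph ((E'.erase e₀).filter (fun e => c₀ e = i))).IsAcyclic) :
    ∃ c : Sym2 V → Fin k, ∀ i, (gph (E'.filter (fun e => c e = i))).IsAcyclic := by
  classical
  by_contra hno
  push_neg at hno
  obtain ⟨x₀, y₀, he₀eq⟩ : ∃ x y, e₀ = s(x, y) := Sym2.ind (fun a b => ⟨a, b, rfl⟩) e₀
  subst he₀eq
  have hx₀y₀ : x₀ ≠ y₀ := by
    intro hcontra
    exact hnd _ he₀ (by rw [hcontra]; exact Sym2.mk_isDiag_iff.2 rfl)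
  -- all reachable states are good
  have h_good : ∀ σ, Relation.ReflTransGen (Step E') (c₀, s(x₀,y₀)) σ → Good E' σ := by
    intro σ hσ
    induction hσ with
    | refl => exact ⟨he₀, hc₀⟩
    | tail hab hbc ih => exact good_step ih hbc
  -- all reachable states are stuck
  have h_stuck : ∀ σ, Relation.ReflTransGen (Step E') (c₀, s(x₀,y₀)) σ → ∀ (i : Fin k) (x y : V),
      σ.2 = s(x,y) → (gph (cls E' σ i)).Reachable x y := by
    intro σ hσ i x y hσ2
    have hgood : Good E' σ := h_good σ hσ
    by_contra hnr
    have hσ2E : σ.2 ∈ E' := hgood.1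
    have hxy : x ≠ y := by
      intro hcontra
      exact hnd _ hσ2E (by rw [hσ2, hcontra]; exact Sym2.mk_isDiag_iff.2 rfl)
    have hins : (gph (insert s(x,y) (cls E' σ i))).IsAcyclic :=
      insert_acyclic_of_not_reachable hxy (hgood.2 i) hnr
    obtain ⟨j, hj⟩ := hno (fun e => if e = σ.2 then i else σ.1 e)
    apply hj
    by_cases hji : j = i
    · subst hji
      have heq : E'.filter (fun e => (if e = σ.2 then j else σ.1 e) = j)
          = insert s(x,y) (cls E' σ j) := by
        ext e
        rw [Finset.mem_filter, Finset.mem_insert, mem_cls, ← hσ2]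
        by_cases hef : e = σ.2
        · subst hef
          simp only [if_pos rfl]
          tauto
        · simp only [if_neg hef]
          tauto
      rw [heq]
      exact hins
    · have heq : E'.filter (fun e => (if e = σ.2 then i else σ.1 e) = j) = cls E' σ j := by
        ext e
        rw [Finset.mem_filter, mem_cls]
        by_cases hef : e = σ.2
        · subst hef
          simp only [if_pos rfl]
          constructor
          · rintro ⟨_, h⟩
            exact absurd h.symm hji
          · rintro ⟨_, h2, _⟩
            exact absurd rfl h2
        · simp only [if_neg hef]
          tauto
      rw [heq]
      exact hgood.2 j
  -- available exchange steps
  have h_steps : ∀ σ, Relation.ReflTransGen (Step E') (c₀, s(x₀,y₀)) σ →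
      ∀ (i : Fin k) (x y : V), σ.2 = s(x,y) →
      ∃ w : (gph (cls E' σ i)).Walk x y, w.IsPath ∧ ∀ e' ∈ w.edges,
        Relation.ReflTransGen (Step E') (c₀, s(x₀,y₀))
          ((fun e => if e = σ.2 then i else σ.1 e), e') := by
    intro σ hσ i x y hσ2
    obtain ⟨w0⟩ := h_stuck σ hσ i x y hσ2
    have hxy : x ≠ y := by
      intro hcontra
      exact hnd _ (h_good σ hσ).1 (by rw [hσ2, hcontra]; exact Sym2.mk_isDiag_iff.2 rfl)
    refine ⟨w0.toPath.1, w0.toPath.2, fun e' he' => ?_⟩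
    exact hσ.tail ⟨i, x, y, w0.toPath.1, w0.toPath.2, hσ2, hxy, he', rfl⟩
  -- the set of pending edges and the reachable region
  set E0 : Set (Sym2 V) :=
    {e | ∃ σ, Relation.ReflTransGen (Step E') (c₀, s(x₀,y₀)) σ ∧ σ.2 = e} with hE0
  set Gstar : SimpleGraph V := SimpleGraph.fromEdgeSet E0 with hGstar
  set U : Set V := {z | Gstar.Reachable x₀ z} with hU
  have he₀E0 : s(x₀,y₀) ∈ E0 := ⟨(c₀, s(x₀,y₀)), Relation.ReflTransGen.refl, rfl⟩
  have hx₀U : x₀ ∈ U := SimpleGraph.Reachable.refl _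
  have hy₀U : y₀ ∈ U := SimpleGraph.Adj.reachable
    ((SimpleGraph.fromEdgeSet_adj _).2 ⟨he₀E0, hx₀y₀⟩)
  -- supports of walks whose edges are pending candidates stay in U
  have h_supp : ∀ {x yy : V} {F : Finset (Sym2 V)} (w : (gph F).Walk x yy),
      (∀ e ∈ w.edges, e ∈ E0) → x ∈ U → ∀ z ∈ w.support, z ∈ U := by
    intro x yy F w hwE0 hxU z hz
    have hcond : ∀ e ∈ w.edges, e ∈ Gstar.edgeSet := by
      intro e he
      rw [hGstar, SimpleGraph.edgeSet_fromEdgeSet]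
      exact ⟨hwE0 e he, (edge_mem_of_mem_edges he).2⟩
    have hz' : z ∈ (w.transfer Gstar hcond).support := by
      rwa [SimpleGraph.Walk.support_transfer]
    exact SimpleGraph.Reachable.trans hxU ⟨(w.transfer Gstar hcond).takeUntil z hz'⟩
  clear_value U
  -- the invariant: pending ends lie in U, and the restricted reachability relations
  -- never change
  have h_inv : ∀ σ, Relation.ReflTransGen (Step E') (c₀, s(x₀,y₀)) σ →
      (∀ z ∈ σ.2, z ∈ U) ∧ ∀ (i : Fin k) (a b : V),
        (gph ((cls E' σ i).filter (fun e => ∀ v ∈ e, v ∈ U))).Reachable a b ↔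
        (gph ((cls E' (c₀, s(x₀,y₀)) i).filter (fun e => ∀ v ∈ e, v ∈ U))).Reachable a b := by
    intro σ hσ
    induction hσ with
    | refl =>
      refine ⟨?_, fun i a b => Iff.rfl⟩
      intro z hz
      rcases Sym2.mem_iff.1 hz with rfl | rfl
      exacts [hx₀U, hy₀U]
    | @tail σ' τ hab hbc ih =>
      obtain ⟨i, x, y, w, hwp, hσ2, hxy, hτ2, hτ1⟩ := hbc
      have hxU : x ∈ U := ih.1 x (by rw [hσ2]; simp)
      have hwE0 : ∀ e' ∈ w.edges, e' ∈ E0 := fun e' he' =>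
        ⟨((fun e => if e = σ'.2 then i else σ'.1 e), e'),
          hab.tail ⟨i, x, y, w, hwp, hσ2, hxy, he', rfl⟩, rfl⟩
      have hsupp : ∀ z ∈ w.support, z ∈ U := h_supp w hwE0 hxU
      have hends : ∀ z ∈ τ.2, z ∈ U :=
        fun z hz => hsupp z (mem_support_of_mem_edges hτ2 hz)
      have hτcls : τ.2 ∈ cls E' σ' i := (edge_mem_of_mem_edges hτ2).1
      have hkey := cls_update_eq (c := σ'.1) (f := σ'.2) (e' := τ.2) (i := i)
        (h_good σ' hab).1 hτcls
      refine ⟨hends, ?_⟩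
      intro j a b
      by_cases hji : j = i
      · subst hji
        have heq : (cls E' τ j).filter (fun e => ∀ v ∈ e, v ∈ U)
            = insert s(x,y) (((cls E' σ' j).filter (fun e => ∀ v ∈ e, v ∈ U)).erase τ.2) := by
          have h1 := hkey.1
          rw [← hτ1] at h1
          rw [show cls E' τ j = insert σ'.2 ((cls E' σ' j).erase τ.2) from h1]
          rw [Finset.filter_insert, if_pos (fun z hz => ih.1 z hz), Finset.filter_erase, hσ2]
        have hcond : ∀ e ∈ w.edges,
            e ∈ (gph ((cls E' σ' j).filter (fun e => ∀ v ∈ e, v ∈ U))).edgeSet := by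
          intro e he
          rw [SimpleGraph.edgeSet_fromEdgeSet]
          obtain ⟨hmem, hdiag⟩ := edge_mem_of_mem_edges he
          refine ⟨?_, hdiag⟩
          have : e ∈ (cls E' σ' j).filter (fun e => ∀ v ∈ e, v ∈ U) :=
            Finset.mem_filter.2 ⟨hmem, fun v hv => hsupp v (mem_support_of_mem_edges he hv)⟩
          exact_mod_cast this
        have hwUp : (w.transfer _ hcond).IsTrail := (hwp.transfer hcond).isTrail
        have hmm : τ.2 ∈ (w.transfer _ hcond).edges := by
          rw [SimpleGraph.Walk.edges_transfer]
          exact hτ2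
        have hnotin : s(x,y) ∉ (cls E' σ' j).filter (fun e => ∀ v ∈ e, v ∈ U) := fun hmem =>
          (mem_cls.1 (Finset.mem_filter.1 hmem).1).2.1 hσ2.symm
        have hswap := swap_reach hxy hnotin (w.transfer _ hcond) hwUp hmm a b
        rw [heq]
        exact hswap.trans (ih.2 j a b)
      · have heq : cls E' τ j = cls E' σ' j := by
          have h1 := hkey.2 j hji
          rw [← hτ1] at h1
          exact h1
        rw [heq]
        exact ih.2 j a b
  -- every vertex of U is reachable from x₀ inside each restricted colour class
  have h_allU : ∀ z ∈ U, ∀ i : Fin k,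
      (gph ((cls E' (c₀, s(x₀,y₀)) i).filter (fun e => ∀ v ∈ e, v ∈ U))).Reachable x₀ z := by
    intro z hz i
    have hzr : Gstar.Reachable x₀ z := by rw [hU] at hz; exact hz
    refine reach_descend (fun a b hab => ?_) hzr
    rw [hGstar, SimpleGraph.fromEdgeSet_adj] at hab
    obtain ⟨⟨σ', hσ', hσ'2⟩, hne⟩ := hab
    obtain ⟨w, hwp, hsteps⟩ := h_steps σ' hσ' i a b hσ'2
    have hwE0 : ∀ e' ∈ w.edges, e' ∈ E0 := fun e' he' => ⟨_, hsteps e' he', rfl⟩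
    have haU : a ∈ U := (h_inv σ' hσ').1 a (by rw [hσ'2]; simp)
    have hsupp : ∀ v ∈ w.support, v ∈ U := h_supp w hwE0 haU
    have hcond : ∀ e ∈ w.edges,
        e ∈ (gph ((cls E' σ' i).filter (fun e => ∀ v ∈ e, v ∈ U))).edgeSet := by
      intro e he
      rw [SimpleGraph.edgeSet_fromEdgeSet]
      obtain ⟨hmem, hdiag⟩ := edge_mem_of_mem_edges he
      refine ⟨?_, hdiag⟩
      have : e ∈ (cls E' σ' i).filter (fun e => ∀ v ∈ e, v ∈ U) :=
        Finset.mem_filter.2 ⟨hmem, fun v hv => hsupp v (mem_support_of_mem_edges he hv)⟩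
      exact_mod_cast this
    exact ((h_inv σ' hσ').2 i a b).1 ⟨w.transfer _ hcond⟩
  -- the final counting argument
  set Ufin : Finset V := Set.Finite.toFinset (Set.toFinite U) with hUfin
  have hUmem : ∀ z, z ∈ Ufin ↔ z ∈ U := fun z => Set.Finite.mem_toFinset _
  have htree : ∀ i : Fin k,
      Ufin.card = ((cls E' (c₀, s(x₀,y₀)) i).filter (fun e => ∀ v ∈ e, v ∈ U)).card + 1 := by
    intro i
    refine card_ge_of_connected_inside ⟨x₀, (hUmem x₀).2 hx₀U⟩ _ ?_ ?_ ?_ ?_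
    · exact fun e he => hnd e (mem_cls.1 (Finset.mem_filter.1 he).1).1
    · exact fun e he v hv => (hUmem v).2 ((Finset.mem_filter.1 he).2 v hv)
    · exact acyclic_anti (gph_mono (Finset.filter_subset _ _))
        ((h_good _ Relation.ReflTransGen.refl).2 i)
    · intro a b ha hb
      exact ((h_allU a ((hUmem a).1 ha) i).symm.trans (h_allU b ((hUmem b).1 hb) i))
  have hT : s(x₀,y₀) ∈ E'.filter (fun e => ∀ v ∈ e, v ∈ Ufin) := by
    refine Finset.mem_filter.2 ⟨he₀, ?_⟩
    intro v hv
    rcases Sym2.mem_iff.1 hv with rfl | rfl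
    exacts [(hUmem _).2 hx₀U, (hUmem _).2 hy₀U]
  have hsub : (Finset.univ : Finset (Fin k)).biUnion
      (fun i => (cls E' (c₀, s(x₀,y₀)) i).filter (fun e => ∀ v ∈ e, v ∈ U))
      ⊆ (E'.filter (fun e => ∀ v ∈ e, v ∈ Ufin)).erase s(x₀,y₀) := by
    intro e he
    obtain ⟨i, _, hei⟩ := Finset.mem_biUnion.1 he
    obtain ⟨hcls, hinU⟩ := Finset.mem_filter.1 hei
    refine Finset.mem_erase.2 ⟨(mem_cls.1 hcls).2.1, Finset.mem_filter.2
      ⟨(mem_cls.1 hcls).1, fun v hv => (hUmem v).2 (hinU v hv)⟩⟩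
  have hdisj : ∀ i ∈ (Finset.univ : Finset (Fin k)), ∀ j ∈ (Finset.univ : Finset (Fin k)),
      i ≠ j → Disjoint ((cls E' (c₀, s(x₀,y₀)) i).filter (fun e => ∀ v ∈ e, v ∈ U))
        ((cls E' (c₀, s(x₀,y₀)) j).filter (fun e => ∀ v ∈ e, v ∈ U)) := by
    intro i _ j _ hij
    rw [Finset.disjoint_left]
    intro e hei hej
    have h1 := (mem_cls.1 (Finset.mem_filter.1 hei).1).2.2
    have h2 := (mem_cls.1 (Finset.mem_filter.1 hej).1).2.2
    exact hij (h1 ▸ h2 ▸ rfl)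
  have hbcard := Finset.card_biUnion hdisj
  have hsum : ∀ i : Fin k,
      ((cls E' (c₀, s(x₀,y₀)) i).filter (fun e => ∀ v ∈ e, v ∈ U)).card = Ufin.card - 1 := by
    intro i
    have := htree i
    omega
  have hcard1 : ((Finset.univ : Finset (Fin k)).biUnion
      (fun i => (cls E' (c₀, s(x₀,y₀)) i).filter (fun e => ∀ v ∈ e, v ∈ U))).card
      = k * (Ufin.card - 1) := by
    rw [hbcard]
    rw [Finset.sum_congr rfl (fun i _ => hsum i)]
    simp [Finset.sum_const, Finset.card_univ, mul_comm]
  have hcard2 := Finset.card_le_card hsub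
  have hcard3 := Finset.card_erase_of_mem hT
  have hspU := hsp Ufin
  have hTpos : 0 < (E'.filter (fun e => ∀ v ∈ e, v ∈ Ufin)).card :=
    Finset.card_pos.2 ⟨_, hT⟩
  omega

end Augment

/-- Nash-Williams sufficiency: a sparse edge set partitions into `k` forests. -/
theorem nw_suff [Fintype V] {k : ℕ} (hk : 0 < k) (E : Finset (Sym2 V))
    (hnd : ∀ e ∈ E, ¬e.IsDiag)
    (hsp : ∀ S : Finset V, (E.filter (fun e => ∀ v ∈ e, v ∈ S)).card ≤ k * (S.card - 1)) :
    ∃ c : Sym2 V → Fin k, ∀ i, (gph (E.filter (fun e => c e = i))).IsAcyclic := by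
  classical
  induction E using Finset.induction_on with
  | empty =>
    refine ⟨fun _ => ⟨0, hk⟩, fun i => ?_⟩
    rw [Finset.filter_empty]
    convert SimpleGraph.isAcyclic_bot (V := V)
    simp [gph]
  | @insert e₀ E he₀ ih =>
    obtain ⟨c₀, hc₀⟩ := ih (fun e he => hnd e (Finset.mem_insert_of_mem he))
      (fun S => le_trans (Finset.card_le_card (fun e hme => by
        rw [Finset.mem_filter] at hme ⊢
        exact ⟨Finset.mem_insert_of_mem hme.1, hme.2⟩)) (hsp S))
    refine augment hnd hsp (Finset.mem_insert_self e₀ E) (c₀ := c₀) ?_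
    intro i
    rw [Finset.erase_insert he₀]
    exact hc₀ i

end NWproof

section Assembly

open NWproof

variable {V : Type*} [Fintype V] [DecidableEq V]

/-- arithmetic helper -/
lemma nw_ceil_le_iff {n m c : ℕ} (hc : 2 ≤ c) :
    Nat.ceil ((n : ℚ) / ((c : ℚ) - 1)) ≤ m ↔ n ≤ m * (c - 1) := by
  have hpos : (0 : ℚ) < (c : ℚ) - 1 := by
    have : (2 : ℚ) ≤ (c : ℚ) := by exact_mod_cast hc
    linarith
  rw [Nat.ceil_le, div_le_iff₀ hpos]
  constructor
  · intro h
    have h2 : (n : ℚ) ≤ ((m * (c - 1) : ℕ) : ℚ) := by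
      push_cast [Nat.cast_sub (by omega : 1 ≤ c)]
      linarith
    exact_mod_cast h2
  · intro h
    have h2 : (n : ℚ) ≤ ((m * (c - 1) : ℕ) : ℚ) := Nat.cast_le.2 h
    push_cast [Nat.cast_sub (by omega : 1 ≤ c)] at h2
    linarith

/-- a finite edge finset for an arbitrary simple graph -/
noncomputable def myEdges (G : SimpleGraph V) : Finset (Sym2 V) :=
  (Set.toFinite G.edgeSet).toFinset

lemma mem_myEdges {G : SimpleGraph V} {e : Sym2 V} : e ∈ myEdges G ↔ e ∈ G.edgeSet :=
  Set.Finite.mem_toFinset _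

lemma myEdges_nd {G : SimpleGraph V} : ∀ e ∈ myEdges G, ¬e.IsDiag := fun e he =>
  SimpleGraph.not_isDiag_of_mem_edgeSet G (mem_myEdges.1 he)

lemma ncard_eq_filter_card (G : SimpleGraph V) (S : Finset V) :
    {e ∈ G.edgeSet | ∀ v ∈ e, v ∈ S}.ncard
      = ((myEdges G).filter (fun e => ∀ v ∈ e, v ∈ S)).card := by
  classical
  rw [show {e ∈ G.edgeSet | ∀ v ∈ e, v ∈ S}
      = ↑((myEdges G).filter (fun e => ∀ v ∈ e, v ∈ S)) by
    ext e
    simp only [Set.mem_setOf_eq, Finset.coe_filter, mem_myEdges]]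
  rw [Set.ncard_coe_finset]

lemma filter_empty_of_card_le_one {G : SimpleGraph V} {S : Finset V} (hS : S.card ≤ 1) :
    ((myEdges G).filter (fun e => ∀ v ∈ e, v ∈ S)).card = 0 := by
  rw [Finset.card_eq_zero, Finset.eq_empty_iff_forall_notMem]
  intro e he
  rw [Finset.mem_filter] at he
  obtain ⟨he1, he2⟩ := he
  have hnd := myEdges_nd e he1
  induction e with
  | _ a b =>
    have hab : a ≠ b := fun h => hnd (Sym2.mk_isDiag_iff.2 h)
    have : 1 < S.card := Finset.one_lt_card.2 ⟨a, he2 a (by simp), b, he2 b (by simp), hab⟩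
    omega

end Assembly

open NWproof

/-- Nash-Williams: for a finite simple graph on at least two vertices, the
arboricity equals `max_{S, |S| ≥ 2} ⌈|E(S)| / (|S| - 1)⌉`, where `E(S)` is the
set of edges with both endpoints in `S`. -/
theorem stmt4 {V : Type*} [Fintype V] [DecidableEq V] (G : SimpleGraph V)
    (h : 2 ≤ Fintype.card V) :
    arboricity G = Finset.univ.powerset.sup (fun S : Finset V =>
      if 2 ≤ S.card then
        Nat.ceil (({e ∈ G.edgeSet | ∀ v ∈ e, v ∈ S}.ncard : ℚ) / ((S.card : ℚ) - 1))
      else 0) := by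
  classical
  set k := Finset.univ.powerset.sup (fun S : Finset V =>
      if 2 ≤ S.card then
        Nat.ceil (({e ∈ G.edgeSet | ∀ v ∈ e, v ∈ S}.ncard : ℚ) / ((S.card : ℚ) - 1))
      else 0) with hk
  have hsp : ∀ S : Finset V, ((myEdges G).filter (fun e => ∀ v ∈ e, v ∈ S)).card
      ≤ k * (S.card - 1) := by
    intro S
    by_cases hS : 2 ≤ S.card
    · have hle : (if 2 ≤ S.card then
          Nat.ceil (({e ∈ G.edgeSet | ∀ v ∈ e, v ∈ S}.ncard : ℚ) / ((S.card : ℚ) - 1))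
        else 0) ≤ k := Finset.le_sup (f := fun S : Finset V =>
        if 2 ≤ S.card then
          Nat.ceil (({e ∈ G.edgeSet | ∀ v ∈ e, v ∈ S}.ncard : ℚ) / ((S.card : ℚ) - 1))
        else 0) (Finset.mem_powerset.2 (Finset.subset_univ S))
      rw [if_pos hS, ncard_eq_filter_card] at hle
      exact (nw_ceil_le_iff hS).1 hle
    · rw [filter_empty_of_card_le_one (by omega)]
      exact Nat.zero_le _
  have hmem : HasForestPartition G k := by
    by_cases hk0 : k = 0
    · have hE : myEdges G = ∅ := by
        have h1 := hsp Finset.univ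
        rw [hk0, Nat.zero_mul, Nat.le_zero, Finset.card_eq_zero,
          Finset.filter_true_of_mem (fun e _ => fun v _ => Finset.mem_univ v)] at h1
        exact h1
      have hEs : G.edgeSet = ∅ := by
        ext e
        simp only [Set.mem_empty_iff_false, iff_false]
        intro hmm
        have h2 : e ∈ myEdges G := mem_myEdges.2 hmm
        rw [hE] at h2
        exact absurd h2 (Finset.notMem_empty e)
      refine ⟨fun e => False.elim (Set.eq_empty_iff_forall_notMem.mp hEs _ e.2), fun i => ?_⟩
      exact absurd i.2 (by omega)
    · obtain ⟨c, hc⟩ := nw_suff (Nat.pos_of_ne_zero hk0) (myEdges G) myEdges_nd hsp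
      refine ⟨fun e => c e.1, fun i => ?_⟩
      show (SimpleGraph.fromEdgeSet {e : Sym2 V | ∃ _ : e ∈ G.edgeSet, c e = i}).IsAcyclic
      have hset : {e : Sym2 V | ∃ _ : e ∈ G.edgeSet, c e = i}
          = ↑((myEdges G).filter (fun e => c e = i)) := by
        ext e
        simp [mem_myEdges, exists_prop]
      rw [hset]
      exact hc i
  have hub : arboricity G ≤ k := Nat.sInf_le (hmem)
  have hlb : k ≤ arboricity G := by
    apply le_csInf ⟨k, hmem⟩
    intro m hm
    obtain ⟨f, hf⟩ := hm
    rw [hk]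
    apply Finset.sup_le
    intro S _
    by_cases hS : 2 ≤ S.card
    · rw [if_pos hS, ncard_eq_filter_card, nw_ceil_le_iff hS]
      have hsub : (myEdges G).filter (fun e => ∀ v ∈ e, v ∈ S) ⊆ (Finset.univ : Finset (Fin m)).biUnion (fun i =>
          ((myEdges G).filter (fun e => ∀ v ∈ e, v ∈ S)).filter (fun e => ∃ h : e ∈ G.edgeSet, f ⟨e, h⟩ = i)) := by
        intro e he
        have heS : e ∈ G.edgeSet := mem_myEdges.1 (Finset.mem_filter.1 he).1
        exact Finset.mem_biUnion.2 ⟨f ⟨e, heS⟩, Finset.mem_univ _,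
          Finset.mem_filter.2 ⟨he, heS, rfl⟩⟩
      have hbound : ∀ i : Fin m,
          (((myEdges G).filter (fun e => ∀ v ∈ e, v ∈ S)).filter (fun e => ∃ h : e ∈ G.edgeSet, f ⟨e, h⟩ = i)).card ≤ S.card - 1 := by
        intro i
        have hac : (gph (((myEdges G).filter (fun e => ∀ v ∈ e, v ∈ S)).filter (fun e => ∃ h : e ∈ G.edgeSet, f ⟨e, h⟩ = i))).IsAcyclic := by
          refine acyclic_anti ?_ (hf i)
          apply SimpleGraph.fromEdgeSet_mono
          intro e he
          simp only [Finset.coe_filter, Set.mem_setOf_eq] at he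
          exact he.2
        have hb := card_le_of_acyclic_inside (S := S) (Finset.card_pos.1 (by omega))
          (((myEdges G).filter (fun e => ∀ v ∈ e, v ∈ S)).filter
            (fun e => ∃ h : e ∈ G.edgeSet, f ⟨e, h⟩ = i))
          (fun e he => myEdges_nd e (Finset.mem_filter.1 (Finset.mem_filter.1 he).1).1)
          (fun e he v hv => (Finset.mem_filter.1 (Finset.mem_filter.1 he).1).2 v hv) hac
        omega
      calc ((myEdges G).filter (fun e => ∀ v ∈ e, v ∈ S)).card ≤ ((Finset.univ : Finset (Fin m)).biUnion (fun i =>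
              ((myEdges G).filter (fun e => ∀ v ∈ e, v ∈ S)).filter (fun e => ∃ h : e ∈ G.edgeSet, f ⟨e, h⟩ = i))).card :=
            Finset.card_le_card hsub
        _ ≤ ∑ i : Fin m,
              (((myEdges G).filter (fun e => ∀ v ∈ e, v ∈ S)).filter (fun e => ∃ h : e ∈ G.edgeSet, f ⟨e, h⟩ = i)).card :=
            Finset.card_biUnion_le
        _ ≤ ∑ _i : Fin m, (S.card - 1) := Finset.sum_le_sum (fun i _ => hbound i)
        _ = m * (S.card - 1) := by
            rw [Finset.sum_const, Finset.card_univ, Fintype.card_fin, smul_eq_mul]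
    · rw [if_neg hS]
      exact Nat.zero_le _
  exact le_antisymm hub hlb
end
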